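/- Let F = (F_1,...,F_M) be an ordered collection of k-CNFs and ℓ ≥ k. The total number of paths Π such that Π is a path of length exactly t in some tree T in the set CCDT_ℓ(F) of canonical common ℓ-partial decision trees for F is at most (2^{ℓ+k} · 2^{ℓ+k})^{⌈t/ℓ⌉} ≤ 16^{t+ℓ}. -/

import Mathlib

/-! Canonical (common partial) decision trees for collections of CNFs, and the bound on the number
of length-t paths in the trees of `CCDT_ℓ(F)`. -/

/-- A restriction: `none` denotes ∗. -/
abbrev Restr (n : ℕ) := Fin n → Option Bool

/-- A clause: a list of literals `(variable, sign)`. -/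
abbrev Clause (n : ℕ) := List (Fin n × Bool)

/-- A CNF: an ordered list of clauses. -/
abbrev CNF (n : ℕ) := List (Clause n)

/-- A path: the ordered list of queried variables together with the answers received. -/
abbrev QPath (n : ℕ) := List (Fin n × Bool)

/-- Status of a clause under a restriction: `some true` = satisfied (identically 1),
`some false` = falsified (identically 0), `none` = undetermined. -/
def clauseStatus {n : ℕ} (ρ : Restr n) (c : Clause n) : Option Bool :=
  if ∃ l ∈ c, ρ l.1 = some l.2 then some true
  else if ∀ l ∈ c, ρ l.1 = some (!l.2) then some false
  else none

/-- The surviving variables of a clause under a restriction, in order of first appearance. -/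
def survivors {n : ℕ} (ρ : Restr n) (c : Clause n) : List (Fin n) :=
  ((c.map Prod.fst).filter fun i => ρ i = none).dedup

/-- Extend a restriction by the assignments recorded along a path. -/
def extendR {n : ℕ} (ρ : Restr n) (π : QPath n) : Restr n := fun i =>
  match π.find? (fun l => decide (l.1 = i)) with
  | some l => some l.2
  | none => ρ i

/-- `CDTFullPath F ρ η` : `η` is a *full* path in the canonical decision tree `CDT(F ↾ ρ)`, i.e. a
path each of whose segments (in particular the final one) assigns all surviving variables of the
first not-identically-1 clause reached. -/
inductive CDTFullPath {n : ℕ} : CNF n → Restr n → QPath n → Prop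
  | skip {c : Clause n} {F : CNF n} {ρ : Restr n} {η : QPath n} :
      clauseStatus ρ c = some true → CDTFullPath F ρ η → CDTFullPath (c :: F) ρ η
  | last {c : Clause n} {F : CNF n} {ρ : Restr n} (bs : List Bool) :
      clauseStatus ρ c = none → bs.length = (survivors ρ c).length →
      CDTFullPath (c :: F) ρ ((survivors ρ c).zip bs)
  | step {c : Clause n} {F : CNF n} {ρ : Restr n} (bs : List Bool) {η' : QPath n} :
      clauseStatus ρ c = none → bs.length = (survivors ρ c).length →
      CDTFullPath (c :: F) (extendR ρ ((survivors ρ c).zip bs)) η' →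
      CDTFullPath (c :: F) ρ ((survivors ρ c).zip bs ++ η')

/-- `CCDTPath ℓ k Fs ρ Π` : `Π` is a path through some tree in the set `CCDT_ℓ(Fs ↾ ρ)` of
canonical common ℓ-partial decision trees for the ordered collection `Fs` of k-CNFs. At each stage,
if the canonical decision tree of the first formula has depth ≤ ℓ (no full path longer than ℓ) the
formula is discarded; otherwise a witnessing full path `η` of length between ℓ+1 and ℓ+k is chosen,
all its variables are queried (the path may stop partway through this block of queries), and the
construction recurses on the whole collection restricted by the answers received. -/
inductive CCDTPath {n : ℕ} (ℓ k : ℕ) : List (CNF n) → Restr n → QPath n → Prop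
  | nil {ρ : Restr n} : CCDTPath ℓ k [] ρ []
  | short {F : CNF n} {Fs : List (CNF n)} {ρ : Restr n} {PP : QPath n} :
      (∀ η, CDTFullPath F ρ η → η.length ≤ ℓ) →
      CCDTPath ℓ k Fs ρ PP → CCDTPath ℓ k (F :: Fs) ρ PP
  | partialSeg {F : CNF n} {Fs : List (CNF n)} {ρ : Restr n} (η : QPath n) (bs : List Bool) :
      CDTFullPath F ρ η → ℓ < η.length → η.length ≤ ℓ + k →
      bs.length ≤ η.length →
      CCDTPath ℓ k (F :: Fs) ρ (((η.map Prod.fst).take bs.length).zip bs)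
  | fullSeg {F : CNF n} {Fs : List (CNF n)} {ρ : Restr n} (η : QPath n) (bs : List Bool)
      {PP' : QPath n} :
      CDTFullPath F ρ η → ℓ < η.length → η.length ≤ ℓ + k →
      bs.length = η.length →
      CCDTPath ℓ k (F :: Fs) (extendR ρ ((η.map Prod.fst).zip bs)) PP' →
      CCDTPath ℓ k (F :: Fs) ρ ((η.map Prod.fst).zip bs ++ PP')

lemma survivors_ne_nil {n : ℕ} {ρ : Restr n} {c : Clause n} (h : clauseStatus ρ c = none) :
    survivors ρ c ≠ [] := by
  unfold clauseStatus at h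
  split_ifs at h with h1 h2
  push_neg at h2
  obtain ⟨l, hl, hne⟩ := h2
  have h1' : ρ l.1 ≠ some l.2 := fun hc => h1 ⟨l, hl, hc⟩
  have hnone : ρ l.1 = none := by
    rcases hρ : ρ l.1 with _ | b
    · rfl
    · exfalso; cases b <;> cases hb : l.2 <;> simp_all
  have : l.1 ∈ survivors ρ c := by
    unfold survivors
    rw [List.mem_dedup, List.mem_filter]
    exact ⟨List.mem_map_of_mem hl, by simp [hnone]⟩
  exact List.ne_nil_of_mem this

def decodeCDT {n : ℕ} : ℕ → CNF n → Restr n → List Bool → Option (QPath n × List Bool)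
  | 0, _, _, _ => none
  | _+1, [], _, _ => none
  | fuel+1, c :: F, ρ, s =>
    match clauseStatus ρ c with
    | some true => decodeCDT fuel F ρ s
    | some false => none
    | none =>
      match s.drop (survivors ρ c).length with
      | [] => none
      | true :: rest =>
          (decodeCDT fuel (c :: F)
              (extendR ρ ((survivors ρ c).zip (s.take (survivors ρ c).length))) rest).map
            (fun p => ((survivors ρ c).zip (s.take (survivors ρ c).length) ++ p.1, p.2))
      | false :: rest => some ((survivors ρ c).zip (s.take (survivors ρ c).length), rest)

lemma decodeCDT_spec {n : ℕ} {F : CNF n} {ρ : Restr n} {η : QPath n} (h : CDTFullPath F ρ η) :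
    ∃ enc : List Bool, enc ≠ [] ∧ enc.length ≤ 2 * η.length ∧
      ∀ m r, decodeCDT (enc.length + F.length + 1 + m) F ρ (enc ++ r) = some (η, r) := by
  induction h with
  | @skip c F ρ η hst _ ih =>
    obtain ⟨enc, hne, hlen, hdec⟩ := ih
    refine ⟨enc, hne, hlen, fun m r => ?_⟩
    have e : enc.length + (c :: F).length + 1 + m = (enc.length + F.length + 1 + m) + 1 := by
      simp [List.length_cons]; omega
    rw [e]
    simp only [decodeCDT, hst]
    exact hdec m r
  | @last c F ρ bs hst hlen =>
    have hpos : 0 < bs.length := by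
      rw [hlen]; exact List.length_pos_iff.mpr (survivors_ne_nil hst)
    refine ⟨bs ++ [false], by simp, ?_, fun m r => ?_⟩
    · simp [List.length_zip, hlen]; omega
    · have e : (bs ++ [false]).length + (c :: F).length + 1 + m
          = (bs.length + F.length + 1 + m + 1) + 1 := by simp; omega
      rw [e]
      simp only [decodeCDT, hst]
      have edrop : ((bs ++ [false]) ++ r).drop (survivors ρ c).length = false :: r := by
        rw [List.append_assoc, List.singleton_append, List.drop_left' hlen]
      have etake : ((bs ++ [false]) ++ r).take (survivors ρ c).length = bs := by
        rw [List.append_assoc, List.singleton_append, List.take_left' hlen]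
      rw [edrop, etake]
  | @step c F ρ bs η' hst hlen _ ih =>
    obtain ⟨enc, hne, hlen', hdec⟩ := ih
    have hpos : 0 < bs.length := by
      rw [hlen]; exact List.length_pos_iff.mpr (survivors_ne_nil hst)
    refine ⟨bs ++ true :: enc, by simp, ?_, fun m r => ?_⟩
    · simp [List.length_zip, hlen] at *; omega
    · have e : (bs ++ true :: enc).length + (c :: F).length + 1 + m
          = (enc.length + (c :: F).length + 1 + (bs.length + m)) + 1 := by simp; omega
      rw [e]
      simp only [decodeCDT, hst]
      have edrop : ((bs ++ true :: enc) ++ r).drop (survivors ρ c).length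
          = true :: (enc ++ r) := by
        rw [List.append_assoc, List.cons_append, List.drop_left' hlen]
      have etake : ((bs ++ true :: enc) ++ r).take (survivors ρ c).length = bs := by
        rw [List.append_assoc, List.cons_append, List.take_left' hlen]
      rw [edrop, etake]
      show Option.map (fun p => ((survivors ρ c).zip bs ++ p.1, p.2))
          (decodeCDT (enc.length + (c :: F).length + 1 + (bs.length + m)) (c :: F)
            (extendR ρ ((survivors ρ c).zip bs)) (enc ++ r)) = _
      rw [hdec (bs.length + m) r]
      rfl
open Classical in
noncomputable def decodeCCDT {n : ℕ} (ℓ : ℕ) : ℕ → List (CNF n) → Restr n → List Bool → Option (QPath n)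
  | 0, _, _, _ => none
  | _+1, [], _, _ => some []
  | fuel+1, F :: Fs, ρ, s =>
    if ∃ η, CDTFullPath F ρ η ∧ ℓ < η.length then
      match decodeCDT fuel F ρ s with
      | none => none
      | some (η, r) =>
        if r.length ≤ η.length then some (((η.map Prod.fst).take r.length).zip r)
        else
          (decodeCCDT ℓ fuel (F :: Fs)
              (extendR ρ ((η.map Prod.fst).zip (r.take η.length))) (r.drop η.length)).map
            (((η.map Prod.fst).zip (r.take η.length)) ++ ·)
    else decodeCCDT ℓ fuel Fs ρ s

def fuelFor {n : ℕ} (Fs : List (CNF n)) : ℕ := (Fs.map fun F => F.length + 1).sum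

lemma decodeCCDT_spec {n : ℕ} {ℓ k : ℕ} (hk : k ≤ ℓ) {Fs : List (CNF n)} {ρ : Restr n}
    {PP : QPath n} (h : CCDTPath ℓ k Fs ρ PP) :
    ∃ enc : List Bool, enc.length ≤ 3 * PP.length + 4 * ℓ ∧ (enc = [] → PP = []) ∧
      ∀ m, decodeCCDT ℓ (enc.length + fuelFor Fs + 1 + m) Fs ρ enc = some PP := by
  induction h with
  | @nil ρ =>
    refine ⟨[], by simp, fun _ => rfl, fun m => ?_⟩
    have e : ([] : List Bool).length + fuelFor ([] : List (CNF n)) + 1 + m = m + 1 := by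
      simp [fuelFor]; omega
    rw [e]
    rfl
  | @short F Fs ρ PP hshort _ ih =>
    obtain ⟨enc, hlen, hemp, hdec⟩ := ih
    refine ⟨enc, hlen, hemp, fun m => ?_⟩
    have e : enc.length + fuelFor (F :: Fs) + 1 + m
        = (enc.length + fuelFor Fs + 1 + (F.length + m)) + 1 := by
      simp [fuelFor]; omega
    rw [e]
    simp only [decodeCCDT]
    rw [if_neg (by rintro ⟨η, hη, hl⟩; exact absurd (hshort η hη) (by omega))]
    exact hdec (F.length + m)
  | @partialSeg F Fs ρ η bs hη hl hlk hbs =>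
    obtain ⟨eη, hene, helen, hedec⟩ := decodeCDT_spec hη
    refine ⟨eη ++ bs, ?_, ?_, fun m => ?_⟩
    · have : (((η.map Prod.fst).take bs.length).zip bs).length = bs.length := by
        simp [List.length_zip, List.length_take]; omega
      rw [this]; simp; omega
    · intro hc
      exact absurd (List.append_eq_nil_iff.mp hc).1 hene
    · have e : (eη ++ bs).length + fuelFor (F :: Fs) + 1 + m
          = (eη.length + F.length + 1 + (bs.length + fuelFor Fs + m)) + 1 := by
        simp [fuelFor]; omega
      rw [e]
      simp only [decodeCCDT]
      rw [if_pos ⟨η, hη, hl⟩, hedec (bs.length + fuelFor Fs + m) bs]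
      show (if bs.length ≤ η.length then _ else _) = _
      rw [if_pos hbs]
  | @fullSeg F Fs ρ η bs PP' hη hl hlk hbs _ ih =>
    obtain ⟨eη, hene, helen, hedec⟩ := decodeCDT_spec hη
    obtain ⟨enc', hlen', hemp', hdec'⟩ := ih
    have hzlen : ((η.map Prod.fst).zip bs).length = η.length := by
      simp [List.length_zip]; omega
    refine ⟨eη ++ bs ++ enc', ?_, ?_, fun m => ?_⟩
    · simp only [List.length_append, hzlen]
      omega
    · intro hc
      simp only [List.append_assoc, List.append_eq_nil_iff] at hc
      exact absurd hc.1 hene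
    · have e : (eη ++ bs ++ enc').length + fuelFor (F :: Fs) + 1 + m
          = (eη.length + F.length + 1 + (bs.length + enc'.length + fuelFor Fs + m)) + 1 := by
        simp [fuelFor]; omega
      rw [e]
      simp only [decodeCCDT]
      rw [if_pos ⟨η, hη, hl⟩]
      rw [show eη ++ bs ++ enc' = eη ++ (bs ++ enc') by simp [List.append_assoc]]
      rw [hedec (bs.length + enc'.length + fuelFor Fs + m) (bs ++ enc')]
      show (if (bs ++ enc').length ≤ η.length then _ else _) = _
      rcases eq_or_ne enc' [] with henil | henil
      · subst henil
        rw [if_pos (by simp [hbs])]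
        have : (η.map Prod.fst).take (bs ++ []).length = η.map Prod.fst := by
          simp [List.take_of_length_le, hbs]
        rw [List.append_nil] at this ⊢
        rw [show (η.map Prod.fst).take bs.length = η.map Prod.fst from this]
        rw [hemp' rfl, List.append_nil]
      · have hpos : 0 < enc'.length := List.length_pos_iff.mpr henil
        rw [if_neg (by simp; omega)]
        have etake : (bs ++ enc').take η.length = bs := List.take_left' hbs
        have edrop : (bs ++ enc').drop η.length = enc' := List.drop_left' hbs
        rw [etake, edrop]
        have e2 : eη.length + F.length + 1 + (bs.length + enc'.length + fuelFor Fs + m)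
            = enc'.length + fuelFor (F :: Fs) + 1 + (eη.length + bs.length + m - 1) := by
          simp [fuelFor]
          have : 0 < eη.length := List.length_pos_iff.mpr hene
          omega
        rw [e2, hdec' (eη.length + bs.length + m - 1)]
        rfl
lemma pad_marker_inj : ∀ (l1 l2 : List Bool) (m1 m2 : ℕ),
    l1 ++ true :: List.replicate m1 false = l2 ++ true :: List.replicate m2 false → l1 = l2 := by
  intro l1
  induction l1 with
  | nil =>
    intro l2 m1 m2 h
    cases l2 with
    | nil => rfl
    | cons b l2' =>
      exfalso
      simp only [List.nil_append, List.cons_append, List.cons.injEq] at h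
      obtain ⟨hb, htl⟩ := h
      have : (true : Bool) ∈ List.replicate m1 false := by
        rw [htl]
        exact List.mem_append_right _ List.mem_cons_self
      simpa using List.eq_of_mem_replicate this
  | cons a l1' ih =>
    intro l2 m1 m2 h
    cases l2 with
    | nil =>
      exfalso
      simp only [List.nil_append, List.cons_append, List.cons.injEq] at h
      obtain ⟨hb, htl⟩ := h
      have : (true : Bool) ∈ List.replicate m2 false := by
        rw [← htl]
        exact List.mem_append_right _ List.mem_cons_self
      simpa using List.eq_of_mem_replicate this
    | cons b l2' =>
      simp only [List.cons_append, List.cons.injEq] at h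
      rw [h.1, ih l2' m1 m2 h.2]

/-- for an ordered collection F of k-CNFs and ℓ ≥ k, the number of paths of length
exactly t in trees of `CCDT_ℓ(F)` is at most (2^{ℓ+k} · 2^{ℓ+k})^{⌈t/ℓ⌉} ≤ 16^{t+ℓ}. -/
theorem ccdt_path_count {n : ℕ} (k ℓ t : ℕ) (hk : k ≤ ℓ)
    (F : List (CNF n)) (hwidth : ∀ f ∈ F, ∀ c ∈ f, c.length ≤ k) :
    Nat.card {PP : QPath n // PP.length = t ∧ CCDTPath ℓ k F (fun _ => none) PP}
      ≤ 16 ^ (t + ℓ) := by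
  rcases Nat.eq_zero_or_pos t with ht | ht
  · subst ht
    have hinj : Function.Injective
        (fun _ : {PP : QPath n // PP.length = 0 ∧ CCDTPath ℓ k F (fun _ => none) PP} =>
          (() : Unit)) := by
      intro a b _
      exact Subtype.ext ((List.length_eq_zero_iff.mp a.2.1).trans (List.length_eq_zero_iff.mp b.2.1).symm)
    calc Nat.card {PP : QPath n // PP.length = 0 ∧ CCDTPath ℓ k F (fun _ => none) PP}
        ≤ Nat.card Unit := Nat.card_le_card_of_injective _ hinj
      _ = 1 := by simp
      _ ≤ 16 ^ (0 + ℓ) := Nat.one_le_pow _ _ (by norm_num)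
  · set B := 3 * t + 4 * ℓ with hB
    have key : ∀ x : {PP : QPath n // PP.length = t ∧ CCDTPath ℓ k F (fun _ => none) PP},
        ∃ enc : List Bool, enc.length ≤ B ∧
          decodeCCDT ℓ (enc.length + fuelFor F + 1) F (fun _ => none) enc = some x.1 := by
      intro x
      obtain ⟨enc, hlen, _, hdec⟩ := decodeCCDT_spec hk x.2.2
      refine ⟨enc, ?_, ?_⟩
      · rw [x.2.1] at hlen; omega
      · simpa using hdec 0
    choose encf henclen hencdec using key
    set pad : {PP : QPath n // PP.length = t ∧ CCDTPath ℓ k F (fun _ => none) PP} →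
        (Fin (B + 1) → Bool) := fun x i =>
      (encf x ++ true :: List.replicate (B - (encf x).length) false).getD i false with hpad
    have hplen : ∀ x, (encf x ++ true :: List.replicate (B - (encf x).length) false).length
        = B + 1 := by
      intro x
      have := henclen x
      simp [List.length_replicate]
      omega
    have hpinj : Function.Injective pad := by
      intro a b hab
      have heq : encf a ++ true :: List.replicate (B - (encf a).length) false
          = encf b ++ true :: List.replicate (B - (encf b).length) false := by
        refine List.ext_getElem (by rw [hplen a, hplen b]) fun i h1 h2 => ?_
        have h3 := congrFun hab ⟨i, by rw [hplen a] at h1; exact h1⟩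
        simp only [hpad, Fin.val_mk] at h3
        rwa [List.getD_eq_getElem _ _ h1, List.getD_eq_getElem _ _ h2] at h3
      have henc : encf a = encf b := pad_marker_inj _ _ _ _ heq
      have : some a.1 = some b.1 := by
        rw [← hencdec a, ← hencdec b, henc]
      exact Subtype.ext (Option.some_injective _ this)
    calc Nat.card {PP : QPath n // PP.length = t ∧ CCDTPath ℓ k F (fun _ => none) PP}
        ≤ Nat.card (Fin (B + 1) → Bool) := Nat.card_le_card_of_injective pad hpinj
      _ = 2 ^ (B + 1) := by
          simp [Nat.card_eq_fintype_card, Fintype.card_fun]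
      _ ≤ 2 ^ (4 * (t + ℓ)) := Nat.pow_le_pow_right (by norm_num) (by omega)
      _ = 16 ^ (t + ℓ) := by
          rw [show (16 : ℕ) = 2 ^ 4 from rfl, ← pow_mul]
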